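/- Let R be a commutative local ring and p ∈ R a nonzerodivisor such that pR is a prime ideal. Let M be an R-module equipped with R-linear endomorphisms F₁, F₂, K satisfying: F₁ and F₂ are idempotent with F₁ + F₂ = id and F₁∘F₂ = F₂∘F₁ = 0; K∘F₁ = F₂∘K; K² = p·id; and the images F₁M and F₂M are free R-modules of rank 1. Then (M, F₁, F₂, K) is isomorphic, via an R-linear isomorphism intertwining the respective operators, to exactly one of the two standard data (T, E₁, E₂, J) and (T', E₁, E₂, J') below; in particular, these two standard data are not isomorphic to each other. -/

import Mathlib

section

variable (R : Type*) [CommRing R] (p : R)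

/-- The endomorphism `E₁(u,v) = (u,0)` of the standard module `R²`. -/
def E₁ : R × R →ₗ[R] R × R := (LinearMap.inl R R R).comp (LinearMap.fst R R R)

/-- The endomorphism `E₂(u,v) = (0,v)` of the standard module `R²`. -/
def E₂ : R × R →ₗ[R] R × R := (LinearMap.inr R R R).comp (LinearMap.snd R R R)

/-- The endomorphism `J(u,v) = (v, p·u)` of the standard module `T`. -/
def J : R × R →ₗ[R] R × R :=
  (LinearMap.inl R R R).comp (LinearMap.snd R R R)
    + (LinearMap.inr R R R).comp (p • LinearMap.fst R R R)

/-- The endomorphism `J'(u,v) = (p·v, u)` of the twisted standard module `T'`. -/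
def J' : R × R →ₗ[R] R × R :=
  (LinearMap.inl R R R).comp (p • LinearMap.snd R R R)
    + (LinearMap.inr R R R).comp (LinearMap.fst R R R)

end

theorem E₁_apply {R : Type*} [CommRing R] (x : R × R) : E₁ R x = (x.1, 0) := by
  simp [E₁]

theorem E₂_apply {R : Type*} [CommRing R] (x : R × R) : E₂ R x = (0, x.2) := by
  simp [E₂]

theorem J_apply {R : Type*} [CommRing R] (p : R) (x : R × R) : J R p x = (x.2, p * x.1) := by
  simp [J, Prod.ext_iff]

theorem J'_apply {R : Type*} [CommRing R] (p : R) (x : R × R) : J' R p x = (p * x.2, x.1) := by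
  simp [J', Prod.ext_iff]

/-- Let `R` be a commutative local ring and `p ∈ R` a nonzerodivisor with `pR` prime. Let `M`
be an `R`-module with `R`-linear endomorphisms `F₁, F₂, K` such that `F₁, F₂` are idempotent
with `F₁ + F₂ = id` and `F₁∘F₂ = F₂∘F₁ = 0`, `K∘F₁ = F₂∘K`, `K² = p·id`, and the images
`F₁M, F₂M` are free `R`-modules of rank 1. Then `(M, F₁, F₂, K)` is isomorphic, via an
`R`-linear isomorphism intertwining the operators, to exactly one of the two standard data
`(T, E₁, E₂, J)` and `(T', E₁, E₂, J')`; in particular the latter two are not isomorphic. -/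
theorem stmt16 {R : Type*} [CommRing R] [IsLocalRing R] (p : R)
    (hp : p ∈ nonZeroDivisors R) (hprime : (Ideal.span {p}).IsPrime)
    (M : Type*) [AddCommGroup M] [Module R M] (F₁ F₂ K : M →ₗ[R] M)
    (hF₁ : F₁ ∘ₗ F₁ = F₁) (hF₂ : F₂ ∘ₗ F₂ = F₂) (hsum : F₁ + F₂ = LinearMap.id)
    (h₁₂ : F₁ ∘ₗ F₂ = 0) (h₂₁ : F₂ ∘ₗ F₁ = 0)
    (hKF : K ∘ₗ F₁ = F₂ ∘ₗ K) (hK2 : K ∘ₗ K = p • LinearMap.id)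
    (b₁ : Module.Basis (Fin 1) R (LinearMap.range F₁)) (b₂ : Module.Basis (Fin 1) R (LinearMap.range F₂)) :
    Xor'
      (∃ e : M ≃ₗ[R] R × R,
        e.toLinearMap ∘ₗ F₁ = E₁ R ∘ₗ e.toLinearMap ∧
        e.toLinearMap ∘ₗ F₂ = E₂ R ∘ₗ e.toLinearMap ∧
        e.toLinearMap ∘ₗ K = J R p ∘ₗ e.toLinearMap)
      (∃ e : M ≃ₗ[R] R × R,
        e.toLinearMap ∘ₗ F₁ = E₁ R ∘ₗ e.toLinearMap ∧
        e.toLinearMap ∘ₗ F₂ = E₂ R ∘ₗ e.toLinearMap ∧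
        e.toLinearMap ∘ₗ K = J' R p ∘ₗ e.toLinearMap) := by
  classical
  have hm₁mem : ((b₁ 0 : LinearMap.range F₁) : M) ∈ LinearMap.range F₁ := (b₁ 0).2
  have hm₂mem : ((b₂ 0 : LinearMap.range F₂) : M) ∈ LinearMap.range F₂ := (b₂ 0).2
  set m₁ : M := ((b₁ 0 : LinearMap.range F₁) : M) with hm₁def
  set m₂ : M := ((b₂ 0 : LinearMap.range F₂) : M) with hm₂def
  -- basic action facts
  have hF₁m₁ : F₁ m₁ = m₁ := by
    obtain ⟨x, hx⟩ := hm₁mem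
    rw [← hx, ← LinearMap.comp_apply, hF₁]
  have hF₂m₂ : F₂ m₂ = m₂ := by
    obtain ⟨x, hx⟩ := hm₂mem
    rw [← hx, ← LinearMap.comp_apply, hF₂]
  have hF₂m₁ : F₂ m₁ = 0 := by
    obtain ⟨x, hx⟩ := hm₁mem
    rw [← hx, ← LinearMap.comp_apply, h₂₁, LinearMap.zero_apply]
  have hF₁m₂ : F₁ m₂ = 0 := by
    obtain ⟨x, hx⟩ := hm₂mem
    rw [← hx, ← LinearMap.comp_apply, h₁₂, LinearMap.zero_apply]
  -- coordinates
  set c₁ : M →ₗ[R] R := (b₁.coord 0) ∘ₗ F₁.rangeRestrict with hc₁def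
  set c₂ : M →ₗ[R] R := (b₂.coord 0) ∘ₗ F₂.rangeRestrict with hc₂def
  have hF₁eq : ∀ m : M, F₁ m = c₁ m • m₁ := by
    intro m
    have h := b₁.sum_repr (F₁.rangeRestrict m)
    rw [Fin.sum_univ_one] at h
    have h2 := congrArg (Subtype.val) h
    simpa [hc₁def, Module.Basis.coord_apply] using h2.symm
  have hF₂eq : ∀ m : M, F₂ m = c₂ m • m₂ := by
    intro m
    have h := b₂.sum_repr (F₂.rangeRestrict m)
    rw [Fin.sum_univ_one] at h
    have h2 := congrArg (Subtype.val) h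
    simpa [hc₂def, Module.Basis.coord_apply] using h2.symm
  have hdecomp : ∀ m : M, c₁ m • m₁ + c₂ m • m₂ = m := by
    intro m
    have hs := LinearMap.ext_iff.mp hsum m
    simp only [LinearMap.add_apply, LinearMap.id_apply] at hs
    rw [← hF₁eq, ← hF₂eq, hs]
  have hc₁m₁ : c₁ m₁ = 1 := by
    have hrr : F₁.rangeRestrict m₁ = b₁ 0 := Subtype.ext (by simpa using hF₁m₁)
    simp [hc₁def, hrr, Module.Basis.coord_apply]
  have hc₂m₂ : c₂ m₂ = 1 := by
    have hrr : F₂.rangeRestrict m₂ = b₂ 0 := Subtype.ext (by simpa using hF₂m₂)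
    simp [hc₂def, hrr, Module.Basis.coord_apply]
  have hc₁m₂ : c₁ m₂ = 0 := by
    have hrr : F₁.rangeRestrict m₂ = 0 := Subtype.ext (by simpa using hF₁m₂)
    simp [hc₁def, hrr]
  have hc₂m₁ : c₂ m₁ = 0 := by
    have hrr : F₂.rangeRestrict m₁ = 0 := Subtype.ext (by simpa using hF₂m₁)
    simp [hc₂def, hrr]
  -- K facts
  have hKF' : ∀ m : M, K (F₁ m) = F₂ (K m) := by
    intro m
    have := LinearMap.ext_iff.mp hKF m
    simpa using this
  set a : R := c₂ (K m₁) with hadef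
  set b : R := c₁ (K m₂) with hbdef
  have hKm₁ : K m₁ = a • m₂ := by
    have h1 : F₂ (K m₁) = K m₁ := by rw [← hKF' m₁, hF₁m₁]
    conv_lhs => rw [← h1, hF₂eq]
  have hKm₂ : K m₂ = b • m₁ := by
    have h0 : F₂ (K m₂) = 0 := by rw [← hKF' m₂, hF₁m₂, map_zero]
    have hs := LinearMap.ext_iff.mp hsum (K m₂)
    simp only [LinearMap.add_apply, LinearMap.id_apply] at hs
    rw [h0, add_zero] at hs
    conv_lhs => rw [← hs, hF₁eq]
  have hab : a * b = p := by
    have h2 := LinearMap.ext_iff.mp hK2 m₁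
    simp only [LinearMap.comp_apply, LinearMap.smul_apply, LinearMap.id_apply] at h2
    rw [hKm₁, map_smul, hKm₂, smul_smul] at h2
    have h3 := congrArg c₁ h2
    simpa [hc₁m₁] using h3
  -- coordinate action of the operators
  have hc₁F₁ : ∀ m : M, c₁ (F₁ m) = c₁ m := fun m => by
    rw [hF₁eq m, map_smul, smul_eq_mul, hc₁m₁, mul_one]
  have hc₂F₁ : ∀ m : M, c₂ (F₁ m) = 0 := fun m => by
    rw [hF₁eq m, map_smul, hc₂m₁, smul_zero]
  have hc₂F₂ : ∀ m : M, c₂ (F₂ m) = c₂ m := fun m => by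
    rw [hF₂eq m, map_smul, smul_eq_mul, hc₂m₂, mul_one]
  have hc₁F₂ : ∀ m : M, c₁ (F₂ m) = 0 := fun m => by
    rw [hF₂eq m, map_smul, hc₁m₂, smul_zero]
  have hKm : ∀ m : M, K m = (b * c₂ m) • m₁ + (a * c₁ m) • m₂ := by
    intro m
    conv_lhs => rw [← hdecomp m, map_add, map_smul, map_smul, hKm₁, hKm₂]
    rw [smul_smul, smul_smul, mul_comm (c₁ m) a, mul_comm (c₂ m) b, add_comm]
  have hc₁K : ∀ m : M, c₁ (K m) = b * c₂ m := fun m => by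
    rw [hKm m]; simp [hc₁m₁, hc₁m₂]
  have hc₂K : ∀ m : M, c₂ (K m) = a * c₁ m := fun m => by
    rw [hKm m]; simp [hc₂m₁, hc₂m₂]
  -- generic construction of the isomorphism, for a unit scaling of the second coordinate
  have mkE : ∀ t : Rˣ, ∃ e : M ≃ₗ[R] R × R,
      (∀ m : M, e m = (c₁ m, (t : R) * c₂ m)) ∧
      e.toLinearMap ∘ₗ F₁ = E₁ R ∘ₗ e.toLinearMap ∧
      e.toLinearMap ∘ₗ F₂ = E₂ R ∘ₗ e.toLinearMap := by
    intro t
    set g0 : M →ₗ[R] R × R := LinearMap.prod c₁ ((t : R) • c₂) with hg0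
    set f0 : R × R →ₗ[R] M :=
      (LinearMap.toSpanSingleton R M m₁) ∘ₗ (LinearMap.fst R R R)
        + (LinearMap.toSpanSingleton R M m₂) ∘ₗ
            ((((t⁻¹ : Rˣ) : R)) • LinearMap.snd R R R) with hf0
    have hf0app : ∀ x : R × R, f0 x = x.1 • m₁ + (((t⁻¹ : Rˣ) : R) * x.2) • m₂ := by
      intro x
      simp [hf0, LinearMap.toSpanSingleton_apply, smul_eq_mul]
    have hg0app : ∀ m : M, g0 m = (c₁ m, (t : R) * c₂ m) := by
      intro m
      simp [hg0, smul_eq_mul]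
    have hgf : g0 ∘ₗ f0 = LinearMap.id := by
      apply LinearMap.ext; rintro ⟨u, v⟩
      rw [LinearMap.comp_apply, hf0app, hg0app]
      simp only [map_add, map_smul, smul_eq_mul, hc₁m₁, hc₁m₂, hc₂m₁, hc₂m₂,
        LinearMap.id_apply]
      refine Prod.ext ?_ ?_
      · simp [mul_comm, mul_assoc]
      · simp
    have hfg : f0 ∘ₗ g0 = LinearMap.id := by
      apply LinearMap.ext; intro m
      rw [LinearMap.comp_apply, hg0app, hf0app]
      simp only [LinearMap.id_apply]
      rw [show ((t⁻¹ : Rˣ) : R) * ((t : R) * c₂ m) = c₂ m by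
        rw [← mul_assoc, Units.inv_mul, one_mul]]
      exact hdecomp m
    refine ⟨LinearEquiv.ofLinear g0 f0 hgf hfg, ?_, ?_, ?_⟩
    · intro m; rw [LinearEquiv.ofLinear_apply, hg0app]
    · apply LinearMap.ext; intro m
      simp only [LinearMap.comp_apply, LinearEquiv.coe_coe, LinearEquiv.ofLinear_apply,
        hg0app, E₁_apply, hc₁F₁, hc₂F₁, mul_zero]
    · apply LinearMap.ext; intro m
      simp only [LinearMap.comp_apply, LinearEquiv.coe_coe, LinearEquiv.ofLinear_apply,
        hg0app, E₂_apply, hc₁F₂, hc₂F₂]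
  -- b unit gives the untwisted standard model
  have leftConstr : IsUnit b →
      (∃ e : M ≃ₗ[R] R × R,
        e.toLinearMap ∘ₗ F₁ = E₁ R ∘ₗ e.toLinearMap ∧
        e.toLinearMap ∘ₗ F₂ = E₂ R ∘ₗ e.toLinearMap ∧
        e.toLinearMap ∘ₗ K = J R p ∘ₗ e.toLinearMap) := by
    rintro ⟨tb, htb⟩
    obtain ⟨e, happ, hE1, hE2⟩ := mkE tb
    refine ⟨e, hE1, hE2, ?_⟩
    apply LinearMap.ext; intro m
    simp only [LinearMap.comp_apply, LinearEquiv.coe_coe, happ, J_apply, hc₁K, hc₂K, htb]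
    refine Prod.ext rfl ?_
    simp only
    rw [← mul_assoc, mul_comm b a, hab]
  -- a unit gives the twisted standard model
  have rightConstr : IsUnit a →
      (∃ e : M ≃ₗ[R] R × R,
        e.toLinearMap ∘ₗ F₁ = E₁ R ∘ₗ e.toLinearMap ∧
        e.toLinearMap ∘ₗ F₂ = E₂ R ∘ₗ e.toLinearMap ∧
        e.toLinearMap ∘ₗ K = J' R p ∘ₗ e.toLinearMap) := by
    rintro ⟨ua, hua⟩
    obtain ⟨e, happ, hE1, hE2⟩ := mkE ua⁻¹
    refine ⟨e, hE1, hE2, ?_⟩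
    apply LinearMap.ext; intro m
    simp only [LinearMap.comp_apply, LinearEquiv.coe_coe, happ, J'_apply, hc₁K, hc₂K]
    refine Prod.ext ?_ ?_
    · simp only
      rw [← hab, ← hua]
      rw [show (ua : R) * b * (((ua⁻¹ : Rˣ) : R) * c₂ m) = ((ua : R) * ((ua⁻¹ : Rˣ) : R)) * (b * c₂ m) by ring,
        Units.mul_inv, one_mul]
    · simp only
      rw [← hua, ← mul_assoc, Units.inv_mul, one_mul]
  -- an isomorphism with the untwisted model forces b to be a unit
  have leftImp : (∃ e : M ≃ₗ[R] R × R,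
        e.toLinearMap ∘ₗ F₁ = E₁ R ∘ₗ e.toLinearMap ∧
        e.toLinearMap ∘ₗ F₂ = E₂ R ∘ₗ e.toLinearMap ∧
        e.toLinearMap ∘ₗ K = J R p ∘ₗ e.toLinearMap) → IsUnit b := by
    rintro ⟨e, hE1, hE2, hEK⟩
    have hE1' : ∀ m : M, e (F₁ m) = E₁ R (e m) := fun m => by
      have := LinearMap.ext_iff.mp hE1 m; simpa using this
    have hE2' : ∀ m : M, e (F₂ m) = E₂ R (e m) := fun m => by
      have := LinearMap.ext_iff.mp hE2 m; simpa using this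
    have hEK' : ∀ m : M, e (K m) = J R p (e m) := fun m => by
      have := LinearMap.ext_iff.mp hEK m; simpa using this
    have hem₁2 : (e m₁).2 = 0 := by
      have h := hE1' m₁
      rw [hF₁m₁, E₁_apply] at h
      exact congrArg Prod.snd h
    have hem₂1 : (e m₂).1 = 0 := by
      have h := hE2' m₂
      rw [hF₂m₂, E₂_apply] at h
      exact congrArg Prod.fst h
    have hs : IsUnit (e m₁).1 := by
      obtain ⟨m, hm⟩ := e.surjective (1, 0)
      have h := congrArg e (hdecomp m)
      rw [map_add, map_smul, map_smul, hm] at h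
      have h1 := congrArg Prod.fst h
      simp only [Prod.fst_add, Prod.smul_fst, smul_eq_mul, hem₂1, mul_zero, add_zero] at h1
      exact IsUnit.of_mul_eq_one _ (by rw [mul_comm]; exact h1)
    have ht : b * (e m₁).1 = (e m₂).2 := by
      have h := hEK' m₂
      rw [hKm₂, map_smul, J_apply] at h
      have h1 := congrArg Prod.fst h
      simpa [hem₂1, smul_eq_mul] using h1
    have htu : IsUnit (e m₂).2 := by
      obtain ⟨m, hm⟩ := e.surjective (0, 1)
      have h := congrArg e (hdecomp m)
      rw [map_add, map_smul, map_smul, hm] at h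
      have h1 := congrArg Prod.snd h
      simp only [Prod.snd_add, Prod.smul_snd, smul_eq_mul, hem₁2, mul_zero, zero_add] at h1
      exact IsUnit.of_mul_eq_one _ (by rw [mul_comm]; exact h1)
    rw [← ht] at htu
    exact isUnit_of_mul_isUnit_left htu
  -- an isomorphism with the twisted model forces a to be a unit
  have rightImp : (∃ e : M ≃ₗ[R] R × R,
        e.toLinearMap ∘ₗ F₁ = E₁ R ∘ₗ e.toLinearMap ∧
        e.toLinearMap ∘ₗ F₂ = E₂ R ∘ₗ e.toLinearMap ∧
        e.toLinearMap ∘ₗ K = J' R p ∘ₗ e.toLinearMap) → IsUnit a := by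
    rintro ⟨e, hE1, hE2, hEK⟩
    have hE1' : ∀ m : M, e (F₁ m) = E₁ R (e m) := fun m => by
      have := LinearMap.ext_iff.mp hE1 m; simpa using this
    have hE2' : ∀ m : M, e (F₂ m) = E₂ R (e m) := fun m => by
      have := LinearMap.ext_iff.mp hE2 m; simpa using this
    have hEK' : ∀ m : M, e (K m) = J' R p (e m) := fun m => by
      have := LinearMap.ext_iff.mp hEK m; simpa using this
    have hem₁2 : (e m₁).2 = 0 := by
      have h := hE1' m₁
      rw [hF₁m₁, E₁_apply] at h
      exact congrArg Prod.snd h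
    have hem₂1 : (e m₂).1 = 0 := by
      have h := hE2' m₂
      rw [hF₂m₂, E₂_apply] at h
      exact congrArg Prod.fst h
    have hs : IsUnit (e m₁).1 := by
      obtain ⟨m, hm⟩ := e.surjective (1, 0)
      have h := congrArg e (hdecomp m)
      rw [map_add, map_smul, map_smul, hm] at h
      have h1 := congrArg Prod.fst h
      simp only [Prod.fst_add, Prod.smul_fst, smul_eq_mul, hem₂1, mul_zero, add_zero] at h1
      exact IsUnit.of_mul_eq_one _ (by rw [mul_comm]; exact h1)
    have ht : a * (e m₂).2 = (e m₁).1 := by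
      have h := hEK' m₁
      rw [hKm₁, map_smul, J'_apply] at h
      have h1 := congrArg Prod.snd h
      simpa [hem₁2, smul_eq_mul] using h1
    rw [← ht] at hs
    exact isUnit_of_mul_isUnit_left hs
  -- arithmetic of a, b, p
  have hpnotunit : ¬ IsUnit p := fun h =>
    hprime.ne_top (Ideal.eq_top_of_isUnit_mem _ (Ideal.mem_span_singleton_self p) h)
  have hnotboth : ¬ (IsUnit a ∧ IsUnit b) := fun ⟨h1, h2⟩ => hpnotunit (hab ▸ h1.mul h2)
  have hcases : a ∈ Ideal.span {p} ∨ b ∈ Ideal.span {p} :=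
    hprime.mem_or_mem (show a * b ∈ Ideal.span {p} from hab ▸ Ideal.mem_span_singleton_self p)
  have himp1 : a ∈ Ideal.span {p} → IsUnit b := by
    intro h
    obtain ⟨a', ha'⟩ := Ideal.mem_span_singleton'.mp h
    have h0 : (a' * b - 1) * p = 0 := by
      have hcalc : a' * b * p = p := by
        calc a' * b * p = (a' * p) * b := by ring
        _ = a * b := by rw [ha']
        _ = p := hab
      rw [sub_mul, one_mul, hcalc, sub_self]
    have h1 : a' * b - 1 = 0 := mem_nonZeroDivisors_iff_right.mp hp _ h0
    have h2 : a' * b = 1 := by linear_combination h1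
    exact IsUnit.of_mul_eq_one _ (by rw [mul_comm]; exact h2)
  have himp2 : b ∈ Ideal.span {p} → IsUnit a := by
    intro h
    obtain ⟨b', hb'⟩ := Ideal.mem_span_singleton'.mp h
    have h0 : (b' * a - 1) * p = 0 := by
      have hcalc : b' * a * p = p := by
        calc b' * a * p = a * (b' * p) := by ring
        _ = a * b := by rw [hb']
        _ = p := hab
      rw [sub_mul, one_mul, hcalc, sub_self]
    have h1 : b' * a - 1 = 0 := mem_nonZeroDivisors_iff_right.mp hp _ h0
    have h2 : b' * a = 1 := by linear_combination h1
    exact IsUnit.of_mul_eq_one _ (by rw [mul_comm]; exact h2)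
  rcases hcases with h | h
  · have hb := himp1 h
    exact Or.inl ⟨leftConstr hb, fun hr => hnotboth ⟨rightImp hr, hb⟩⟩
  · have ha := himp2 h
    exact Or.inr ⟨rightConstr ha, fun hl => hnotboth ⟨ha, leftImp hl⟩⟩
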